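/- arXiv:2502.02898 — 2 statements merged into one kernel-verified Lean document; each statement's English description precedes it below -/
import Mathlib

section
/- Let f be in the class BT_B with Taylor coefficients a_n, and let γ_1 = a_2/2, γ_2 = (1/2)(a_3 − a_2²/2), γ_3 = (1/2)(a_4 − a_2·a_3 + a_2³/3) be its logarithmic coefficients. Then the second Hankel determinant of logarithmic coefficients satisfies |γ_1·γ_3 − γ_2²| ≤ 1/144. Equivalently, |a_2⁴ − 12·a_3² + 12·a_2·a_4|/48 ≤ 1/144. -/
open Complex Metric Filter Topology

/-- Principal branch of the square root: `w^(1/2) = exp((1/2) * Log w)`. -/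
noncomputable def psqrt (w : ℂ) : ℂ := Complex.exp ((1/2 : ℂ) * Complex.log w)

/-- The `n`-th Taylor coefficient of `f` at `0`, i.e. `f^(n)(0)/n!`. -/
noncomputable def tCoeff (f : ℂ → ℂ) (n : ℕ) : ℂ := iteratedDeriv n f 0 / n.factorial

/-- The class `BT_B` of bounded turning functions associated with the bean-shaped domain:
`f` is analytic on the unit disk, `f 0 = 0`, `f' 0 = 1`, `f` injective on the disk,
and `f'(z) = (1 + tanh (ω z))^(1/2)` for a Schwarz function `ω`. -/
def IsBTB (f : ℂ → ℂ) : Prop :=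
  AnalyticOnNhd ℂ f (ball 0 1) ∧ f 0 = 0 ∧ deriv f 0 = 1 ∧
  Set.InjOn f (ball 0 1) ∧
  ∃ ω : ℂ → ℂ, AnalyticOnNhd ℂ ω (ball 0 1) ∧ ω 0 = 0 ∧
    (∀ z ∈ ball (0:ℂ) 1, ‖ω z‖ < 1) ∧
    (∀ z ∈ ball (0:ℂ) 1, deriv f z = psqrt (1 + Complex.tanh (ω z)))


lemma analyticAt_deriv' {f : ℂ → ℂ} {x : ℂ} (h : AnalyticAt ℂ f x) : AnalyticAt ℂ (deriv f) x := by
  obtain ⟨s, hs, hfs⟩ := h.eventually_analyticAt.exists_mem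
  exact (AnalyticOnNhd.deriv (fun z hz => hfs z hz)) x (mem_of_mem_nhds hs)

lemma analyticAt_dslope0 {f : ℂ → ℂ} (h : AnalyticAt ℂ f 0) : AnalyticAt ℂ (dslope f 0) 0 := by
  obtain ⟨p, hp⟩ := h
  exact (HasFPowerSeriesAt.has_fpower_series_dslope_fslope hp).analyticAt

lemma evderiv {F G : ℂ → ℂ} (h : ∀ᶠ z in 𝓝 (0:ℂ), HasDerivAt F (G z) z) :
    deriv F =ᶠ[𝓝 (0:ℂ)] G := h.mono fun _ hz => hz.deriv

lemma dslope_derivs {ψ : ℂ → ℂ} (hψ : AnalyticAt ℂ ψ 0) (h0 : ψ 0 = 0) :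
    deriv ψ 0 = dslope ψ 0 0 ∧
    deriv (deriv ψ) 0 = 2 * deriv (dslope ψ 0) 0 ∧
    deriv (deriv (deriv ψ)) 0 = 3 * deriv (deriv (dslope ψ 0)) 0 := by
  set χ := dslope ψ 0 with hχdef
  have hχ : AnalyticAt ℂ χ 0 := analyticAt_dslope0 hψ
  have hχ1 : AnalyticAt ℂ (deriv χ) 0 := analyticAt_deriv' hχ
  have hfe : ψ = fun z => z * χ z := by
    funext z
    have := sub_smul_dslope ψ 0 z
    simp only [sub_zero, smul_eq_mul, h0] at this
    rw [← this, hχdef]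
  have dψ : deriv ψ =ᶠ[𝓝 (0:ℂ)] fun z => χ z + z * deriv χ z := by
    rw [hfe]
    apply evderiv
    filter_upwards [hχ.eventually_analyticAt, hχ1.eventually_analyticAt] with z h1 h2
    have H := (hasDerivAt_id z).mul h1.differentiableAt.hasDerivAt
    refine H.congr_deriv ?_
    simp only [id_eq]; ring
  have dψ2 : deriv (fun z => χ z + z * deriv χ z) =ᶠ[𝓝 (0:ℂ)]
      fun z => 2 * deriv χ z + z * deriv (deriv χ) z := by
    apply evderiv
    filter_upwards [hχ.eventually_analyticAt, hχ1.eventually_analyticAt] with z h1 h2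
    have H := h1.differentiableAt.hasDerivAt.add
      ((hasDerivAt_id z).mul h2.differentiableAt.hasDerivAt)
    refine H.congr_deriv ?_
    simp only [id_eq]; ring
  refine ⟨?_, ?_, ?_⟩
  · have := dψ.eq_of_nhds
    simp at this
    simpa using this
  · have e := dψ.deriv.eq_of_nhds
    rw [e, dψ2.eq_of_nhds]
    simp
  · have e : deriv (deriv (deriv ψ)) 0 = deriv (deriv (fun z => χ z + z * deriv χ z)) 0 :=
      dψ.deriv.deriv.eq_of_nhds
    rw [e, dψ2.deriv.eq_of_nhds]
    have H := (hχ1.differentiableAt.hasDerivAt.const_mul (2:ℂ)).add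
      ((hasDerivAt_id 0).mul (analyticAt_deriv' hχ1).differentiableAt.hasDerivAt)
    have hHd : deriv (fun z => 2 * deriv χ z + z * deriv (deriv χ) z) 0 = _ := H.deriv
    simp only [id_eq] at hHd
    rw [hHd]
    ring

lemma mobius_derivs {χ : ℂ → ℂ} (hχ : AnalyticAt ℂ χ 0)
    (hk : (1:ℂ) - (starRingEnd ℂ) (χ 0) * χ 0 ≠ 0) :
    deriv (fun z => (χ z - χ 0) * (1 - (starRingEnd ℂ) (χ 0) * χ z)⁻¹) 0
      = deriv χ 0 * ((1:ℂ) - (starRingEnd ℂ) (χ 0) * χ 0)⁻¹ ∧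
    deriv (deriv (fun z => (χ z - χ 0) * (1 - (starRingEnd ℂ) (χ 0) * χ z)⁻¹)) 0
      = deriv (deriv χ) 0 * ((1:ℂ) - (starRingEnd ℂ) (χ 0) * χ 0)⁻¹
        + 2 * (starRingEnd ℂ) (χ 0) * (deriv χ 0)^2
          * (((1:ℂ) - (starRingEnd ℂ) (χ 0) * χ 0)⁻¹ * ((1:ℂ) - (starRingEnd ℂ) (χ 0) * χ 0)⁻¹) := by
  set a := χ 0 with ha
  set D : ℂ → ℂ := fun z => 1 - (starRingEnd ℂ) a * χ z with hD
  have hχ1 : AnalyticAt ℂ (deriv χ) 0 := analyticAt_deriv' hχ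
  have hχ2 : AnalyticAt ℂ (deriv (deriv χ)) 0 := analyticAt_deriv' hχ1
  have hDc : ContinuousAt D 0 :=
    continuousAt_const.sub (continuousAt_const.mul hχ.continuousAt)
  have hD0 : D 0 ≠ 0 := hk
  have hevD : ∀ᶠ z in 𝓝 (0:ℂ), D z ≠ 0 := hDc.eventually_ne hk
  set F1 : ℂ → ℂ := fun z => deriv χ z * (D z)⁻¹
    + (χ z - a) * ((starRingEnd ℂ) a * deriv χ z) * ((D z)⁻¹ * (D z)⁻¹) with hF1
  have dM : deriv (fun z => (χ z - a) * (D z)⁻¹) =ᶠ[𝓝 (0:ℂ)] F1 := by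
    apply evderiv
    filter_upwards [hevD, hχ.eventually_analyticAt, hχ1.eventually_analyticAt] with z hne h1 h2
    have hDz : HasDerivAt D (-((starRingEnd ℂ) a * deriv χ z)) z := by
      simpa using (h1.differentiableAt.hasDerivAt.const_mul ((starRingEnd ℂ) a)).const_sub 1
    have H := (h1.differentiableAt.hasDerivAt.sub_const a).mul (hDz.inv hne)
    refine H.congr_deriv ?_
    rw [hF1, Pi.inv_apply]
    field_simp
  constructor
  · have e := dM.eq_of_nhds
    rw [e, hF1]
    simp [← ha, ← hD]
    exact Or.inl rfl
  · have hD0' : HasDerivAt D (-((starRingEnd ℂ) a * deriv χ 0)) 0 := by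
      simpa using (hχ.differentiableAt.hasDerivAt.const_mul ((starRingEnd ℂ) a)).const_sub 1
    have hinv0 := hD0'.inv hD0
    have H := (hχ1.differentiableAt.hasDerivAt.mul hinv0).add
      ((((hχ.differentiableAt.hasDerivAt.sub_const a).mul
          (hχ1.differentiableAt.hasDerivAt.const_mul ((starRingEnd ℂ) a))).mul
        (hinv0.mul hinv0)))
    have e := dM.deriv.eq_of_nhds
    rw [e, show deriv F1 0 = _ from H.deriv]
    simp only [← ha, ← hD, Pi.mul_apply, Pi.inv_apply, sub_self, zero_mul, mul_zero, add_zero, zero_add]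
    have : D 0 = 1 - (starRingEnd ℂ) a * a := by rw [hD]
    rw [this]
    field_simp
    ring

lemma mobius_normSq_key (a w : ℂ) :
    Complex.normSq (1 - (starRingEnd ℂ) a * w) - Complex.normSq (w - a)
      = (1 - Complex.normSq a) * (1 - Complex.normSq w) := by
  simp only [Complex.normSq_apply, Complex.sub_re, Complex.sub_im, Complex.mul_re,
    Complex.mul_im, Complex.conj_re, Complex.conj_im, Complex.one_re, Complex.one_im]
  ring

lemma mobius_abs_le {a w : ℂ} (ha : ‖a‖ < 1) (hw : ‖w‖ ≤ 1) :
    ‖(w - a) * (1 - (starRingEnd ℂ) a * w)⁻¹‖ ≤ 1 := by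
  have hden : (1:ℂ) - (starRingEnd ℂ) a * w ≠ 0 := by
    intro h
    have : ‖(starRingEnd ℂ) a * w‖ = 1 := by
      have : (starRingEnd ℂ) a * w = 1 := by linear_combination -h
      rw [this]; simp
    rw [norm_mul, Complex.norm_conj] at this
    nlinarith [norm_nonneg w, norm_nonneg a]
  have hkey := mobius_normSq_key a w
  have hna : Complex.normSq a < 1 := by
    rw [← Complex.sq_norm]; nlinarith [norm_nonneg a]
  have hnw : Complex.normSq w ≤ 1 := by
    rw [← Complex.sq_norm]; nlinarith [norm_nonneg w]
  have h1 : Complex.normSq (w - a) ≤ Complex.normSq (1 - (starRingEnd ℂ) a * w) := by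
    nlinarith
  have h2 : ‖w - a‖ ≤ ‖1 - (starRingEnd ℂ) a * w‖ := by
    have := Real.sqrt_le_sqrt h1
    simpa [Complex.norm_def] using this
  rw [norm_mul, norm_inv, ← div_eq_mul_inv]
  exact div_le_one_of_le₀ h2 (norm_nonneg _)

lemma schwarz_dslope {χ : ℂ → ℂ} (hd : DifferentiableOn ℂ χ (ball 0 1))
    (hb : ∀ z ∈ ball (0:ℂ) 1, ‖χ z‖ ≤ 1) (h0 : χ 0 = 0) :
    DifferentiableOn ℂ (dslope χ 0) (ball 0 1) ∧
      ∀ z ∈ ball (0:ℂ) 1, ‖dslope χ 0 z‖ ≤ 1 := by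
  constructor
  · intro z hz
    rcases eq_or_ne z 0 with rfl | hz0
    · exact ((analyticAt_dslope0 (hd.analyticAt
        (isOpen_ball.mem_nhds hz))).differentiableAt).differentiableWithinAt
    · exact (differentiableWithinAt_dslope_of_ne hz0).2 (hd z hz)
  · intro z hz
    refine le_of_forall_pos_le_add fun ε hε => ?_
    have hmaps : Set.MapsTo χ (ball 0 1) (ball (χ 0) (1 + ε)) := by
      intro w hw
      rw [h0, mem_ball, dist_zero_right]
      calc ‖χ w‖ = ‖χ w‖ := rfl
        _ ≤ 1 := hb w hw
        _ < 1 + ε := by linarith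
    have := Complex.norm_dslope_le_div_of_mapsTo_ball hd (hmaps.mono_right ball_subset_closedBall) hz
    calc (‖dslope χ 0 z‖ : ℝ) = ‖dslope χ 0 z‖ := rfl
      _ ≤ (1 + ε) / 1 := this
      _ = 1 + ε := by ring

lemma schwarz_pick0 {χ : ℂ → ℂ} (hd : DifferentiableOn ℂ χ (ball 0 1))
    (hb : ∀ z ∈ ball (0:ℂ) 1, ‖χ z‖ ≤ 1) :
    ‖deriv χ 0‖ ≤ 1 - ‖χ 0‖^2 := by
  have h0m : (0:ℂ) ∈ ball (0:ℂ) 1 := mem_ball_self one_pos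
  have ha1 : ‖χ 0‖ ≤ 1 := hb 0 h0m
  rcases eq_or_lt_of_le ha1 with heq | hlt
  · -- |χ 0| = 1 : maximum modulus ⇒ constant
    have hconst : Set.EqOn χ (fun _ => χ 0) (ball 0 1) := by
      apply Complex.eqOn_of_isPreconnected_of_isMaxOn_norm
        (convex_ball (0:ℂ) 1).isPreconnected isOpen_ball hd h0m
      intro z hz
      simp only [Function.comp]
      calc ‖χ z‖ = ‖χ z‖ := rfl
        _ ≤ 1 := hb z hz
        _ = ‖χ 0‖ := heq.symm
        _ = ‖χ 0‖ := rfl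
    have hev : χ =ᶠ[𝓝 (0:ℂ)] fun _ => χ 0 :=
      hconst.eventuallyEq_of_mem (isOpen_ball.mem_nhds h0m)
    have : deriv χ 0 = deriv (fun _ : ℂ => χ 0) 0 := hev.deriv.eq_of_nhds
    rw [this, deriv_const]
    simp [heq]
  · -- |χ 0| < 1
    set a := χ 0 with ha
    have hχ : AnalyticAt ℂ χ 0 := hd.analyticAt (isOpen_ball.mem_nhds h0m)
    have hk : (1:ℂ) - (starRingEnd ℂ) a * a ≠ 0 := by
      intro h
      have h1 : (starRingEnd ℂ) a * a = 1 := by linear_combination -h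
      have : ‖(starRingEnd ℂ) a * a‖ = 1 := by rw [h1]; simp
      rw [norm_mul, Complex.norm_conj] at this
      nlinarith [norm_nonneg a]
    set M : ℂ → ℂ := fun z => (χ z - a) * (1 - (starRingEnd ℂ) a * χ z)⁻¹ with hM
    have hDne : ∀ z ∈ ball (0:ℂ) 1, (1:ℂ) - (starRingEnd ℂ) a * χ z ≠ 0 := by
      intro z hz h
      have h1 : (starRingEnd ℂ) a * χ z = 1 := by linear_combination -h
      have : ‖(starRingEnd ℂ) a * χ z‖ = 1 := by rw [h1]; simp
      rw [norm_mul, Complex.norm_conj] at this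
      nlinarith [norm_nonneg a, norm_nonneg (χ z), hb z hz]
    have hMd : DifferentiableOn ℂ M (ball 0 1) := by
      apply DifferentiableOn.mul (hd.sub_const a)
      exact DifferentiableOn.inv
        ((differentiableOn_const 1).sub ((hd.const_mul _))) hDne
    have hMb : ∀ z ∈ ball (0:ℂ) 1, ‖M z‖ ≤ 1 := fun z hz =>
      mobius_abs_le hlt (hb z hz)
    have hM0 : M 0 = 0 := by simp [hM, ← ha]
    have hbd := (schwarz_dslope hMd hMb hM0).2 0 h0m
    rw [dslope_same] at hbd
    have hder := (mobius_derivs hχ hk).1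
    rw [← hM, ← ha] at hder
    rw [hder] at hbd
    have habs : ‖(1:ℂ) - (starRingEnd ℂ) a * a‖ = 1 - ‖a‖ ^ 2 := by
      have : (starRingEnd ℂ) a * a = (Complex.normSq a : ℂ) := by
        rw [mul_comm, Complex.mul_conj]
      rw [this, ← Complex.ofReal_one, ← Complex.ofReal_sub, Complex.norm_real, Real.norm_eq_abs,
        ← Complex.sq_norm]
      rw [_root_.abs_of_nonneg]
      nlinarith [norm_nonneg a]
    rw [norm_mul, norm_inv, habs] at hbd
    have hpos : (0:ℝ) < 1 - ‖a‖ ^ 2 := by nlinarith [norm_nonneg a]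
    calc ‖deriv χ 0‖
        = ‖deriv χ 0‖ * (1 - ‖a‖ ^ 2)⁻¹ * (1 - ‖a‖ ^ 2) := by
          field_simp
      _ ≤ 1 * (1 - ‖a‖ ^ 2) := by
          apply mul_le_mul_of_nonneg_right hbd hpos.le
      _ = 1 - ‖χ 0‖ ^ 2 := by rw [← ha]; ring

lemma abs_one_sub_conj_mul_self {a : ℂ} (ha : ‖a‖ ≤ 1) :
    ‖(1:ℂ) - (starRingEnd ℂ) a * a‖ = 1 - ‖a‖ ^ 2 := by
  have h : (starRingEnd ℂ) a * a = (Complex.normSq a : ℂ) := by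
    rw [mul_comm, Complex.mul_conj]
  rw [h, ← Complex.ofReal_one, ← Complex.ofReal_sub, Complex.norm_real, Real.norm_eq_abs, ← Complex.sq_norm,
    _root_.abs_of_nonneg]
  nlinarith [norm_nonneg a]

lemma schwarz_coeff_bounds {ω : ℂ → ℂ} (hωd : DifferentiableOn ℂ ω (ball 0 1))
    (hω0 : ω 0 = 0) (hωb : ∀ z ∈ ball (0:ℂ) 1, ‖ω z‖ ≤ 1) :
    ‖deriv ω 0‖ ≤ 1 ∧
    ‖deriv (deriv ω) 0 / 2‖ ≤ 1 - ‖deriv ω 0‖ ^ 2 ∧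
    ‖deriv (deriv (deriv ω)) 0 / 6‖ ≤ 1 - ‖deriv ω 0‖ ^ 2
      - ‖deriv (deriv ω) 0 / 2‖ ^ 2 / (1 + ‖deriv ω 0‖) := by
  have h0m : (0:ℂ) ∈ ball (0:ℂ) 1 := mem_ball_self one_pos
  have hωa : AnalyticAt ℂ ω 0 := hωd.analyticAt (isOpen_ball.mem_nhds h0m)
  set χ := dslope ω 0 with hχdef
  obtain ⟨hχd, hχb⟩ := schwarz_dslope hωd hωb hω0
  obtain ⟨d1, d2, d3⟩ := dslope_derivs hωa hω0
  rw [← hχdef] at d1 d2 d3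
  set x := ‖χ 0‖ with hx
  have hx1 : x ≤ 1 := hχb 0 h0m
  have hb1 : ‖deriv ω 0‖ ≤ 1 := by rw [d1]; exact hx1
  have habs1 : ‖deriv ω 0‖ = x := by rw [d1]
  have hb2' : ‖deriv χ 0‖ ≤ 1 - x ^ 2 := schwarz_pick0 hχd hχb
  have habs2 : ‖deriv (deriv ω) 0 / 2‖ = ‖deriv χ 0‖ := by
    rw [d2]; rw [mul_comm, mul_div_assoc]; simp
  have hb2 : ‖deriv (deriv ω) 0 / 2‖ ≤ 1 - ‖deriv ω 0‖ ^ 2 := by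
    rw [habs2, habs1]; exact hb2'
  refine ⟨hb1, hb2, ?_⟩
  have habs3 : ‖deriv (deriv (deriv ω)) 0 / 6‖
      = ‖deriv (deriv χ) 0 / 2‖ := by
    rw [d3]
    rw [show (3:ℂ) * deriv (deriv χ) 0 / 6 = deriv (deriv χ) 0 / 2 by ring]
  rw [habs3, habs1, habs2]
  set y := ‖deriv χ 0‖ with hy
  set q := ‖deriv (deriv χ) 0 / 2‖ with hq
  -- case split on x = 1 or x < 1
  rcases eq_or_lt_of_le hx1 with heq | hlt
  · -- constant case
    have hconst : Set.EqOn χ (fun _ => χ 0) (ball 0 1) := by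
      apply Complex.eqOn_of_isPreconnected_of_isMaxOn_norm
        (convex_ball (0:ℂ) 1).isPreconnected isOpen_ball hχd h0m
      intro z hz
      simp only [Function.comp]
      calc ‖χ z‖ = ‖χ z‖ := rfl
        _ ≤ 1 := hχb z hz
        _ = ‖χ 0‖ := heq.symm
        _ = ‖χ 0‖ := rfl
    have hev : χ =ᶠ[𝓝 (0:ℂ)] fun _ : ℂ => χ 0 :=
      hconst.eventuallyEq_of_mem (isOpen_ball.mem_nhds h0m)
    have hev1 : deriv χ =ᶠ[𝓝 (0:ℂ)] fun _ : ℂ => (0:ℂ) := by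
      have := hev.deriv
      simpa using this
    have hy0 : y = 0 := by rw [hy, hev1.eq_of_nhds]; simp
    have hq0 : q = 0 := by
      rw [hq]
      have : deriv (deriv χ) 0 = deriv (fun _ : ℂ => (0:ℂ)) 0 := hev1.deriv.eq_of_nhds
      rw [this]; simp
    rw [hy0, hq0, heq]
    norm_num
  · -- Mobius case
    set a := χ 0 with ha
    have hχa : AnalyticAt ℂ χ 0 := hχd.analyticAt (isOpen_ball.mem_nhds h0m)
    have hk : (1:ℂ) - (starRingEnd ℂ) a * a ≠ 0 := by
      intro h
      have h2 : ‖(1:ℂ) - (starRingEnd ℂ) a * a‖ = 0 := by rw [h]; simp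
      rw [abs_one_sub_conj_mul_self hx1] at h2
      rw [← hx] at h2
      have hx0 : (0:ℝ) ≤ x := hx ▸ norm_nonneg a
      nlinarith [hlt]
    set k := (1:ℂ) - (starRingEnd ℂ) a * a with hkdef
    set M : ℂ → ℂ := fun z => (χ z - a) * (1 - (starRingEnd ℂ) a * χ z)⁻¹ with hM
    have hDne : ∀ z ∈ ball (0:ℂ) 1, (1:ℂ) - (starRingEnd ℂ) a * χ z ≠ 0 := by
      intro z hz h
      have h1 : (starRingEnd ℂ) a * χ z = 1 := by linear_combination -h
      have : ‖(starRingEnd ℂ) a * χ z‖ = 1 := by rw [h1]; simp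
      rw [norm_mul, Complex.norm_conj] at this
      nlinarith [norm_nonneg a, norm_nonneg (χ z), hχb z hz]
    have hMd : DifferentiableOn ℂ M (ball 0 1) := by
      apply DifferentiableOn.mul (hχd.sub_const a)
      exact DifferentiableOn.inv
        ((differentiableOn_const 1).sub ((hχd.const_mul _))) hDne
    have hMb : ∀ z ∈ ball (0:ℂ) 1, ‖M z‖ ≤ 1 := fun z hz =>
      mobius_abs_le hlt (hχb z hz)
    have hM0 : M 0 = 0 := by simp [hM, ← ha]
    have hMa : AnalyticAt ℂ M 0 := hMd.analyticAt (isOpen_ball.mem_nhds h0m)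
    obtain ⟨hNd, hNb⟩ := schwarz_dslope hMd hMb hM0
    obtain ⟨e1, e2, _⟩ := dslope_derivs hMa hM0
    obtain ⟨m1, m2⟩ := mobius_derivs hχa hk
    rw [← hM, ← ha, ← hkdef] at m1 m2
    -- N := dslope M 0 ; SP0 on N
    have hsp := schwarz_pick0 hNd hNb
    have hN0 : dslope M 0 0 = deriv χ 0 * k⁻¹ := by rw [dslope_same, m1]
    have hN1 : deriv (dslope M 0) 0
        = (deriv (deriv χ) 0 / 2) * k⁻¹ + (starRingEnd ℂ) a * (deriv χ 0)^2 * (k⁻¹ * k⁻¹) := by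
      have : deriv (dslope M 0) 0 = deriv (deriv M) 0 / 2 := by rw [e2]; ring
      rw [this, m2]; ring
    rw [hN0, hN1] at hsp
    -- convert to real inequality
    have hK : ‖k‖ = 1 - x ^ 2 := abs_one_sub_conj_mul_self hx1
    have hKpos : (0:ℝ) < 1 - x ^ 2 := by nlinarith [norm_nonneg (χ 0)]
    set K := (1:ℝ) - x ^ 2 with hKr
    have hxpos : (0:ℝ) ≤ x := norm_nonneg _
    have h1x : (0:ℝ) < 1 + x := by linarith
    -- triangle inequality
    have htri : q * K⁻¹ - x * y^2 * (K⁻¹ * K⁻¹)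
        ≤ ‖(deriv (deriv χ) 0 / 2) * k⁻¹
            + (starRingEnd ℂ) a * (deriv χ 0)^2 * (k⁻¹ * k⁻¹)‖ := by
      set A := (deriv (deriv χ) 0 / 2) * k⁻¹ with hA
      set B := (starRingEnd ℂ) a * (deriv χ 0)^2 * (k⁻¹ * k⁻¹) with hB
      have habsA : ‖A‖ = q * K⁻¹ := by
        rw [hA, norm_mul, norm_inv, hK]
      have habsB : ‖B‖ = x * y^2 * (K⁻¹ * K⁻¹) := by
        rw [hB]
        simp only [norm_mul, norm_pow, norm_inv, Complex.norm_conj]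
        rw [hK, ← hx, ← hy]
      have h3 : ‖A‖ ≤ ‖A + B‖ + ‖B‖ := by
        have hAB : A = (A + B) + -B := by ring
        calc ‖A‖ = ‖(A + B) + -B‖ := by conv_lhs => rw [hAB]
          _ ≤ ‖A + B‖ + ‖-B‖ := norm_add_le _ _
          _ = ‖A + B‖ + ‖B‖ := by simp
      rw [habsA, habsB] at h3
      linarith
    have hrhs : 1 - ‖deriv χ 0 * k⁻¹‖ ^ 2 = 1 - y^2 * (K⁻¹ * K⁻¹) := by
      rw [norm_mul, norm_inv, hK]; ring
    rw [hrhs] at hsp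
    have hineq : q * K⁻¹ - x * y^2 * (K⁻¹ * K⁻¹) ≤ 1 - y^2 * (K⁻¹ * K⁻¹) := le_trans htri hsp
    -- clear denominators
    have hKne : K ≠ 0 := ne_of_gt hKpos
    have hqK : q * K ≤ K^2 - y^2 + x * y^2 := by
      have h2 := mul_le_mul_of_nonneg_right hineq (by positivity : (0:ℝ) ≤ K^2)
      have eL : (q * K⁻¹ - x * y^2 * (K⁻¹ * K⁻¹)) * K^2 = q * K - x * y^2 := by
        field_simp
      have eR : (1 - y^2 * (K⁻¹ * K⁻¹)) * K^2 = K^2 - y^2 := by field_simp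
      rw [eL, eR] at h2
      linarith
    -- conclude
    clear_value x y q K
    have hgoal : q ≤ K - y^2 / (1 + x) := by
      have hy2 : y^2 = (y^2 / (1+x)) * (1+x) := (div_mul_cancel₀ _ (ne_of_gt h1x)).symm
      have hKform : K = (1+x) * (1-x) := by rw [hKr]; ring
      have h6 : K^2 - y^2 + x * y^2 = K^2 - (y^2 / (1+x)) * K := by
        rw [hKform]
        field_simp
        ring
      have h5 : q * K ≤ K^2 - (y^2 / (1+x)) * K := by rw [← h6]; exact hqK
      by_contra hcon
      push_neg at hcon
      nlinarith [h5, hKpos]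
    rw [hKr] at hgoal
    linarith

lemma coeff_relations {g u : ℂ → ℂ} (hg : AnalyticAt ℂ g 0) (hu : AnalyticAt ℂ u 0)
    (hg0 : g 0 = 1) (hu0 : u 0 = 0)
    (hI : (fun z => g z * g z * Complex.cosh (u z)) =ᶠ[𝓝 (0:ℂ)] (fun z => Complex.exp (u z))) :
    2 * deriv g 0 = deriv u 0 ∧
    2 * deriv g 0 * deriv g 0 + 2 * deriv (deriv g) 0 = deriv (deriv u) 0 ∧
    6 * deriv g 0 * (deriv u 0 * deriv u 0) + 6 * deriv g 0 * deriv (deriv g) 0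
      + 2 * deriv (deriv (deriv g)) 0 = deriv u 0 ^ 3 + deriv (deriv (deriv u)) 0 := by
  have hg1 := analyticAt_deriv' hg
  have hg2 := analyticAt_deriv' hg1
  have hu1 := analyticAt_deriv' hu
  have hu2 := analyticAt_deriv' hu1
  have hev : ∀ᶠ z in 𝓝 (0:ℂ),
      (DifferentiableAt ℂ g z ∧ DifferentiableAt ℂ (deriv g) z ∧
        DifferentiableAt ℂ (deriv (deriv g)) z) ∧
      (DifferentiableAt ℂ u z ∧ DifferentiableAt ℂ (deriv u) z ∧
        DifferentiableAt ℂ (deriv (deriv u)) z) := by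
    filter_upwards [hg.eventually_analyticAt, hg1.eventually_analyticAt,
      hg2.eventually_analyticAt, hu.eventually_analyticAt, hu1.eventually_analyticAt,
      hu2.eventually_analyticAt] with z h1 h2 h3 h4 h5 h6
    exact ⟨⟨h1.differentiableAt, h2.differentiableAt, h3.differentiableAt⟩,
      ⟨h4.differentiableAt, h5.differentiableAt, h6.differentiableAt⟩⟩
  set L1 : ℂ → ℂ := fun z => (2) * Complex.cosh (u z) * g z * deriv g z + Complex.sinh (u z) * g z * g z * deriv u z with hL1
  set R1 : ℂ → ℂ := fun z => Complex.exp (u z) * deriv u z with hR1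
  set L2 : ℂ → ℂ := fun z => Complex.cosh (u z) * g z * g z * deriv u z * deriv u z + (2) * Complex.cosh (u z) * g z * deriv (deriv g) z + (2) * Complex.cosh (u z) * deriv g z * deriv g z + Complex.sinh (u z) * g z * g z * deriv (deriv u) z + (4) * Complex.sinh (u z) * g z * deriv g z * deriv u z with hL2
  set R2 : ℂ → ℂ := fun z => Complex.exp (u z) * deriv u z * deriv u z + Complex.exp (u z) * deriv (deriv u) z with hR2
  set L3 : ℂ → ℂ := fun z => (3) * Complex.cosh (u z) * g z * g z * deriv u z * deriv (deriv u) z + (6) * Complex.cosh (u z) * g z * deriv g z * deriv u z * deriv u z + (2) * Complex.cosh (u z) * g z * deriv (deriv (deriv g)) z + (6) * Complex.cosh (u z) * deriv g z * deriv (deriv g) z + Complex.sinh (u z) * g z * g z * deriv u z * deriv u z * deriv u z + Complex.sinh (u z) * g z * g z * deriv (deriv (deriv u)) z + (6) * Complex.sinh (u z) * g z * deriv g z * deriv (deriv u) z + (6) * Complex.sinh (u z) * g z * deriv (deriv g) z * deriv u z + (6) * Complex.sinh (u z) * deriv g z * deriv g z * deriv u z with hL3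
  set R3 : ℂ → ℂ := fun z => Complex.exp (u z) * deriv u z * deriv u z * deriv u z + (3) * Complex.exp (u z) * deriv u z * deriv (deriv u) z + Complex.exp (u z) * deriv (deriv (deriv u)) z with hR3
  have dL0 : deriv (fun z => g z * g z * Complex.cosh (u z)) =ᶠ[𝓝 (0:ℂ)] L1 := by
    apply evderiv
    filter_upwards [hev] with z hz
    have H := ((hz.1.1.hasDerivAt.mul hz.1.1.hasDerivAt).mul hz.2.1.hasDerivAt.ccosh)
    refine H.congr_deriv ?_
    all_goals simp only [hL1, Pi.mul_apply, Pi.add_apply]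
    all_goals ring
  have dR0 : deriv (fun z => Complex.exp (u z)) =ᶠ[𝓝 (0:ℂ)] R1 := by
    apply evderiv
    filter_upwards [hev] with z hz
    exact hz.2.1.hasDerivAt.cexp
  have dL1 : deriv L1 =ᶠ[𝓝 (0:ℂ)] L2 := by
    apply evderiv
    filter_upwards [hev] with z hz
    have H := (((hz.2.1.hasDerivAt.ccosh.const_mul (2:ℂ)).mul hz.1.1.hasDerivAt).mul
        hz.1.2.1.hasDerivAt).add
      (((hz.2.1.hasDerivAt.csinh.mul hz.1.1.hasDerivAt).mul hz.1.1.hasDerivAt).mul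
        hz.2.2.1.hasDerivAt)
    refine H.congr_deriv ?_
    all_goals simp only [hL2, Pi.mul_apply, Pi.add_apply]
    all_goals ring
  have dR1 : deriv R1 =ᶠ[𝓝 (0:ℂ)] R2 := by
    apply evderiv
    filter_upwards [hev] with z hz
    have H := hz.2.1.hasDerivAt.cexp.mul hz.2.2.1.hasDerivAt
    refine H.congr_deriv ?_
    all_goals simp only [hR2, Pi.mul_apply, Pi.add_apply]
    all_goals ring
  have dL2 : deriv L2 =ᶠ[𝓝 (0:ℂ)] L3 := by
    apply evderiv
    filter_upwards [hev] with z hz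
    have H := ((((((((hz.2.1.hasDerivAt.ccosh.mul hz.1.1.hasDerivAt).mul hz.1.1.hasDerivAt).mul
        hz.2.2.1.hasDerivAt).mul hz.2.2.1.hasDerivAt).add
      (((hz.2.1.hasDerivAt.ccosh.const_mul (2:ℂ)).mul hz.1.1.hasDerivAt).mul
        hz.1.2.2.hasDerivAt)).add
      (((hz.2.1.hasDerivAt.ccosh.const_mul (2:ℂ)).mul hz.1.2.1.hasDerivAt).mul
        hz.1.2.1.hasDerivAt)).add
      (((hz.2.1.hasDerivAt.csinh.mul hz.1.1.hasDerivAt).mul hz.1.1.hasDerivAt).mul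
        hz.2.2.2.hasDerivAt)).add
      ((((hz.2.1.hasDerivAt.csinh.const_mul (4:ℂ)).mul hz.1.1.hasDerivAt).mul
        hz.1.2.1.hasDerivAt).mul hz.2.2.1.hasDerivAt))
    refine H.congr_deriv ?_
    all_goals simp only [hL3, Pi.mul_apply, Pi.add_apply]
    all_goals ring
  have dR2 : deriv R2 =ᶠ[𝓝 (0:ℂ)] R3 := by
    apply evderiv
    filter_upwards [hev] with z hz
    have H := ((hz.2.1.hasDerivAt.cexp.mul hz.2.2.1.hasDerivAt).mul hz.2.2.1.hasDerivAt).add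
      (hz.2.1.hasDerivAt.cexp.mul hz.2.2.2.hasDerivAt)
    refine H.congr_deriv ?_
    all_goals simp only [hR3, Pi.mul_apply, Pi.add_apply]
    all_goals ring
  have I1 : L1 =ᶠ[𝓝 (0:ℂ)] R1 := dL0.symm.trans (hI.deriv.trans dR0)
  have I2 : L2 =ᶠ[𝓝 (0:ℂ)] R2 := dL1.symm.trans (I1.deriv.trans dR1)
  have I3 : L3 =ᶠ[𝓝 (0:ℂ)] R3 := dL2.symm.trans (I2.deriv.trans dR2)
  have e1 := I1.eq_of_nhds
  have e2 := I2.eq_of_nhds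
  have e3 := I3.eq_of_nhds
  simp only [hL1, hR1, hL2, hR2, hL3, hR3, hg0, hu0, Complex.cosh_zero, Complex.sinh_zero,
    Complex.exp_zero] at e1 e2 e3
  refine ⟨by linear_combination e1, by linear_combination e2, by linear_combination e3⟩

lemma keyineq (x y t : ℝ) (hx0 : 0 ≤ x) (hy0 : 0 ≤ y) (ht0 : 0 ≤ t) (hx1 : x ≤ 1)
    (hy : y ≤ 1 - x^2) (ht : t ≤ 1 - x^2 - y^2/(1+x)) :
    73*x^4/768 + x^2*y/48 + y^2/3 + 3*x*t/8 ≤ 1/3 := by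
  have h1x : (0:ℝ) < 1 + x := by linarith
  set d := y^2/(1+x) with hddef
  have hd : d * (1+x) = y^2 := div_mul_cancel₀ _ (ne_of_gt h1x)
  have hd0 : 0 ≤ d := div_nonneg (sq_nonneg y) h1x.le
  have step1 : 3*x*t/8 ≤ 3*x*(1 - x^2 - d)/8 := by nlinarith [ht, hx0]
  have h7 : d ≤ (1-x)^2*(1+x) := by
    have hyb : y^2 ≤ (1-x^2)^2 := by nlinarith [hy, hy0]
    have : d * (1+x) ≤ (1-x)^2*(1+x) * (1+x) := by nlinarith [hd, hyb]
    exact le_of_mul_le_mul_right this h1x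
  have hA : x^2*y ≤ x^2*(1-x^2) := mul_le_mul_of_nonneg_left hy (sq_nonneg x)
  have hB : d*(8-x) ≤ (1-x)^2*(1+x)*(8-x) :=
    mul_le_mul_of_nonneg_right h7 (by linarith)
  have h8 : 25*x^4/768 ≤ 13*x^2/48 := by nlinarith [sq_nonneg x, hx1, hx0]
  nlinarith [step1, hd, hA, hB, h8]

lemma psqrt_mul_self {w : ℂ} (h : w ≠ 0) : psqrt w * psqrt w = w := by
  unfold psqrt
  rw [← Complex.exp_add]
  rw [show (1/2 : ℂ) * Complex.log w + (1/2 : ℂ) * Complex.log w = Complex.log w by ring]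
  exact Complex.exp_log h

theorem BTB_hankel_log_bound (f : ℂ → ℂ) (hf : IsBTB f)
    (γ₁ γ₂ γ₃ : ℂ)
    (hγ₁ : γ₁ = tCoeff f 2 / 2)
    (hγ₂ : γ₂ = (1/2) * (tCoeff f 3 - (tCoeff f 2)^2 / 2))
    (hγ₃ : γ₃ = (1/2) * (tCoeff f 4 - tCoeff f 2 * tCoeff f 3 + (tCoeff f 2)^3 / 3)) :
    ‖γ₁ * γ₃ - γ₂^2‖ ≤ 1/144 := by
  obtain ⟨hfa, hf0, hf'0, hinj, ω, hωa, hω0, hωb, hfd⟩ := hf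
  have h0m : (0:ℂ) ∈ ball (0:ℂ) 1 := mem_ball_self one_pos
  have hga : AnalyticAt ℂ (deriv f) 0 := analyticAt_deriv' (hfa 0 h0m)
  have huA : AnalyticAt ℂ ω 0 := hωa 0 h0m
  -- Step 1: the local functional identity
  have hωc : ContinuousAt ω 0 := huA.continuousAt
  have htanh : ContinuousAt (fun z => Complex.tanh (ω z)) 0 := by
    have h1 : ContinuousAt (fun z => Complex.sinh (ω z) / Complex.cosh (ω z)) 0 := by
      apply ContinuousAt.div
      · exact Complex.continuous_sinh.continuousAt.comp hωc
      · exact Complex.continuous_cosh.continuousAt.comp hωc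
      · simp [hω0]
    have : (fun z => Complex.tanh (ω z)) = fun z => Complex.sinh (ω z) / Complex.cosh (ω z) := by
      funext z; exact Complex.tanh_eq_sinh_div_cosh (ω z)
    rw [this]; exact h1
  have habs : ∀ᶠ z in 𝓝 (0:ℂ), ‖Complex.tanh (ω z)‖ < 1 := by
    have h2 := Metric.tendsto_nhds.mp htanh.tendsto 1 one_pos
    have h0 : Complex.tanh (ω 0) = 0 := by simp [hω0]
    filter_upwards [h2] with z hz
    rw [h0, dist_zero_right] at hz
    exact hz
  have hcosh : ∀ᶠ z in 𝓝 (0:ℂ), Complex.cosh (ω z) ≠ 0 := by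
    have hc : ContinuousAt (fun z => Complex.cosh (ω z)) 0 :=
      Complex.continuous_cosh.continuousAt.comp hωc
    apply hc.eventually_ne
    simp [hω0]
  have hball : ∀ᶠ z in 𝓝 (0:ℂ), z ∈ ball (0:ℂ) 1 := isOpen_ball.mem_nhds h0m
  have hev : (fun z => deriv f z * deriv f z * Complex.cosh (ω z))
      =ᶠ[𝓝 (0:ℂ)] (fun z => Complex.exp (ω z)) := by
    filter_upwards [hball, habs, hcosh] with z hz hzabs hzcosh
    have hne : (1:ℂ) + Complex.tanh (ω z) ≠ 0 := by
      intro h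
      have : Complex.tanh (ω z) = -1 := by linear_combination h
      rw [this] at hzabs
      simp at hzabs
    have hsq : deriv f z * deriv f z = 1 + Complex.tanh (ω z) := by
      rw [hfd z hz]
      exact psqrt_mul_self hne
    have hts : (1 + Complex.tanh (ω z)) * Complex.cosh (ω z)
        = Complex.cosh (ω z) + Complex.sinh (ω z) := by
      rw [Complex.tanh_eq_sinh_div_cosh]
      field_simp
    rw [hsq, hts, Complex.cosh_add_sinh]
  -- Step 2: coefficient relations
  obtain ⟨e1, e2, e3⟩ := coeff_relations hga huA hf'0 hω0 hev
  -- Step 3: Schwarz bounds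
  obtain ⟨b1, b2, b3⟩ := schwarz_coeff_bounds (hωa.differentiableOn) hω0
    (fun z hz => (hωb z hz).le)
  -- Step 4: algebra
  have ht2 : tCoeff f 2 = deriv (deriv f) 0 / 2 := by
    unfold tCoeff
    rw [show iteratedDeriv 2 f = deriv (deriv f) by
      simp [iteratedDeriv_succ, iteratedDeriv_zero]]
    norm_num
  have ht3 : tCoeff f 3 = deriv (deriv (deriv f)) 0 / 6 := by
    unfold tCoeff
    rw [show iteratedDeriv 3 f = deriv (deriv (deriv f)) by
      simp [iteratedDeriv_succ, iteratedDeriv_zero]]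
    norm_num [Nat.factorial]
  have ht4 : tCoeff f 4 = deriv (deriv (deriv (deriv f))) 0 / 24 := by
    unfold tCoeff
    rw [show iteratedDeriv 4 f = deriv (deriv (deriv (deriv f))) by
      simp [iteratedDeriv_succ, iteratedDeriv_zero]]
    norm_num [Nat.factorial]
  have hu1 : deriv ω 0 = 2 * deriv (deriv f) 0 := by linear_combination -e1
  have hu2 : deriv (deriv ω) 0
      = 2 * deriv (deriv f) 0 * deriv (deriv f) 0 + 2 * deriv (deriv (deriv f)) 0 := by
    linear_combination -e2
  have hu3 : deriv (deriv (deriv ω)) 0 = 2 * deriv (deriv (deriv (deriv f))) 0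
      + 6 * deriv (deriv f) 0 * deriv (deriv (deriv f)) 0 + 16 * (deriv (deriv f) 0)^3 := by
    linear_combination -e3 + ((deriv ω 0)^2 - 4 * deriv (deriv f) 0 * deriv ω 0
      - 8 * (deriv (deriv f) 0)^2) * e1
  have hEq : γ₁ * γ₃ - γ₂^2
      = -(73/36864 : ℂ) * (deriv ω 0)^4 - (1/2304 : ℂ) * (deriv ω 0)^2 * (deriv (deriv ω) 0 / 2)
        - (1/144 : ℂ) * (deriv (deriv ω) 0 / 2)^2
        + (1/128 : ℂ) * (deriv ω 0) * (deriv (deriv (deriv ω)) 0 / 6) := by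
    rw [hγ₁, hγ₂, hγ₃, ht2, ht3, ht4, hu1, hu2, hu3]
    ring
  -- Step 5: bound
  set x := ‖deriv ω 0‖ with hx
  set y := ‖deriv (deriv ω) 0 / 2‖ with hy
  set t := ‖deriv (deriv (deriv ω)) 0 / 6‖ with htt
  have hx0 : 0 ≤ x := norm_nonneg _
  have hy0 : 0 ≤ y := norm_nonneg _
  have ht0 : 0 ≤ t := norm_nonneg _
  have hy' : ‖deriv (deriv ω) 0‖ / 2 = y := by
    rw [hy, norm_div]; norm_num
  have htt' : ‖deriv (deriv (deriv ω)) 0‖ / 6 = t := by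
    rw [htt, norm_div]; norm_num
  have habs4 : ‖γ₁ * γ₃ - γ₂^2‖
      ≤ 73/36864 * x^4 + 1/2304 * x^2 * y + 1/144 * y^2 + 1/128 * x * t := by
    rw [hEq]
    set A := -(73/36864 : ℂ) * (deriv ω 0)^4 with hA
    set B := -(1/2304 : ℂ) * (deriv ω 0)^2 * (deriv (deriv ω) 0 / 2) with hB
    set C := -(1/144 : ℂ) * (deriv (deriv ω) 0 / 2)^2 with hC
    set D := (1/128 : ℂ) * (deriv ω 0) * (deriv (deriv (deriv ω)) 0 / 6) with hD
    have step : ‖A + B + C + D‖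
        ≤ ‖A‖ + ‖B‖ + ‖C‖ + ‖D‖ := by
      calc ‖A + B + C + D‖ ≤ ‖A + B + C‖ + ‖D‖ :=
            norm_add_le _ _
        _ ≤ ‖A + B‖ + ‖C‖ + ‖D‖ := by
            linarith [norm_add_le (A + B) C]
        _ ≤ ‖A‖ + ‖B‖ + ‖C‖ + ‖D‖ := by
            linarith [norm_add_le A B]
    have hAv : ‖A‖ = 73/36864 * x^4 := by
      rw [hA]
      simp only [norm_mul, norm_pow, norm_neg, norm_div]
      norm_num [← hx]
    have hBv : ‖B‖ = 1/2304 * x^2 * y := by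
      rw [hB]
      simp only [norm_mul, norm_pow, norm_neg, norm_div]
      norm_num [← hx, hy']
    have hCv : ‖C‖ = 1/144 * y^2 := by
      rw [hC]
      simp only [norm_mul, norm_pow, norm_neg, norm_div]
      norm_num [hy']
    have hDv : ‖D‖ = 1/128 * x * t := by
      rw [hD]
      simp only [norm_mul, norm_pow, norm_div]
      norm_num [← hx, htt']
    have hABCD : A + B + C + D = -(73/36864 : ℂ) * (deriv ω 0)^4
        - (1/2304 : ℂ) * (deriv ω 0)^2 * (deriv (deriv ω) 0 / 2)
        - (1/144 : ℂ) * (deriv (deriv ω) 0 / 2)^2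
        + (1/128 : ℂ) * (deriv ω 0) * (deriv (deriv (deriv ω)) 0 / 6) := by
      rw [hA, hB, hC, hD]; ring
    rw [← hABCD]
    calc ‖A + B + C + D‖
        ≤ ‖A‖ + ‖B‖ + ‖C‖ + ‖D‖ := step
      _ = 73/36864 * x^4 + 1/2304 * x^2 * y + 1/144 * y^2 + 1/128 * x * t := by
          rw [hAv, hBv, hCv, hDv]
  have hkey := keyineq x y t hx0 hy0 ht0 b1 b2 b3
  linarith [habs4, hkey]
end

section
/- Let f be in the class BT_B with Taylor coefficients a_n, and let Γ_1 = −a_2/2, Γ_2 = −(1/2)(a_3 − (3/2)a_2²), Γ_3 = −(1/2)(a_4 − 4·a_2·a_3 + (10/3)a_2³) be the logarithmic coefficients of the inverse function of f. Then the second Hankel determinant of the logarithmic inverse coefficients satisfies |Γ_1·Γ_3 − Γ_2²| ≤ 1/144. Equivalently, |13·a_2⁴ − 12·a_2²·a_3 − 12·a_3² + 12·a_2·a_4|/48 ≤ 1/144. -/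
open Complex Metric

lemma normSq_mob (a w : ℂ) :
    normSq (1 - (starRingEnd ℂ) a * w) - normSq (w - a) = (1 - normSq a) * (1 - normSq w) := by
  simp only [Complex.normSq_apply, Complex.sub_re, Complex.sub_im, Complex.mul_re, Complex.mul_im,
    Complex.conj_re, Complex.conj_im, Complex.one_re, Complex.one_im]
  ring

lemma mob_abs_le {a w : ℂ} (ha : ‖a‖ ≤ 1) (hw : ‖w‖ ≤ 1) :
    ‖w - a‖ ≤ ‖1 - (starRingEnd ℂ) a * w‖ := by
  rw [Complex.norm_def, Complex.norm_def]
  apply Real.sqrt_le_sqrt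
  have h := normSq_mob a w
  have h1 : normSq a ≤ 1 := by rw [← Complex.sq_norm]; nlinarith [norm_nonneg a, norm_nonneg w]
  have h2 : normSq w ≤ 1 := by rw [← Complex.sq_norm]; nlinarith [norm_nonneg a, norm_nonneg w]
  nlinarith [norm_nonneg a, norm_nonneg w]

lemma mob_abs_lt {a w : ℂ} (ha : ‖a‖ < 1) (hw : ‖w‖ < 1) :
    ‖w - a‖ < ‖1 - (starRingEnd ℂ) a * w‖ := by
  have h := normSq_mob a w
  have h1 : normSq a < 1 := by rw [← Complex.sq_norm]; nlinarith [norm_nonneg a]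
  have h2 : normSq w < 1 := by rw [← Complex.sq_norm]; nlinarith [norm_nonneg w]
  rw [Complex.norm_def, Complex.norm_def]
  apply Real.sqrt_lt_sqrt (normSq_nonneg _)
  nlinarith [norm_nonneg a, norm_nonneg w]

lemma mob_den_ne {a w : ℂ} (ha : ‖a‖ < 1) (hw : ‖w‖ ≤ 1) :
    1 - (starRingEnd ℂ) a * w ≠ 0 := by
  intro h
  have : ‖(starRingEnd ℂ) a * w‖ = 1 := by
    have := congrArg norm (sub_eq_zero.mp h)
    simpa using this.symm
  rw [norm_mul, Complex.norm_conj] at this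
  nlinarith [norm_nonneg a, norm_nonneg w,
    mul_le_one₀ ha.le (norm_nonneg w) hw]


lemma SP0 {H : ℂ → ℂ} (hd : DifferentiableOn ℂ H (ball 0 1))
    (hb : ∀ z ∈ ball (0:ℂ) 1, ‖H z‖ ≤ 1) :
    ‖deriv H 0‖ ≤ 1 - ‖H 0‖ ^ 2 := by
  have h0 : (0:ℂ) ∈ ball (0:ℂ) 1 := by simp
  have ha : ‖H 0‖ ≤ 1 := hb 0 h0
  rcases eq_or_lt_of_le ha with hc | ha'
  · -- |H 0| = 1 : maximum modulus ⇒ constant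
    have hmax : IsMaxOn (norm ∘ H) (ball (0:ℂ) 1) 0 := by
      intro z hz
      simp only [Function.comp_apply, Set.mem_setOf_eq, hc]
      exact hb z hz
    have heq := Complex.eqOn_of_isPreconnected_of_isMaxOn_norm
      (convex_ball (0:ℂ) 1).isPreconnected isOpen_ball hd h0 hmax
    have hev : H =ᶠ[nhds (0:ℂ)] (fun _ => H 0) := by
      filter_upwards [isOpen_ball.mem_nhds h0] with z hz using heq hz
    rw [hev.deriv_eq, deriv_const]
    simp [hc]
  · -- |H 0| < 1
    set a := H 0 with haa
    set G := fun z => (H z - a) * (1 - (starRingEnd ℂ) a * H z)⁻¹ with hG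
    have hden : ∀ z ∈ ball (0:ℂ) 1, 1 - (starRingEnd ℂ) a * H z ≠ 0 :=
      fun z hz => mob_den_ne ha' (hb z hz)
    have hGd : DifferentiableOn ℂ G (ball 0 1) :=
      (hd.sub_const a).mul
        (((differentiableOn_const 1).sub ((differentiableOn_const _).mul hd)).inv hden)
    have hG0 : G 0 = 0 := by simp [hG, haa]
    have hGb : ∀ z ∈ ball (0:ℂ) 1, ‖G z‖ ≤ 1 := by
      intro z hz
      rw [hG]
      simp only [norm_mul, norm_inv]
      rw [← div_eq_mul_inv, div_le_one (norm_pos_iff.mpr (hden z hz))]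
      exact mob_abs_le ha (hb z hz)
    have hG1 : ‖deriv G 0‖ ≤ 1 := by
      have key : ∀ ε > (0:ℝ), ‖deriv G 0‖ ≤ 1 + ε := by
        intro ε hε
        have hmaps : Set.MapsTo G (ball 0 1) (ball (G 0) (1 + ε)) := by
          intro z hz
          rw [hG0, mem_ball_zero_iff]
          calc ‖G z‖ ≤ 1 := hGb z hz
          _ < 1 + ε := by linarith
        have := Complex.norm_deriv_le_div_of_mapsTo_ball hGd (hmaps.mono_right ball_subset_closedBall) one_pos
        simpa using this
      exact le_of_forall_pos_le_add key
    -- compute deriv G 0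
    have hH : HasDerivAt H (deriv H 0) 0 :=
      (hd.differentiableAt (isOpen_ball.mem_nhds h0)).hasDerivAt
    have h2 : HasDerivAt (fun z => 1 - (starRingEnd ℂ) a * H z)
        (-((starRingEnd ℂ) a * deriv H 0)) 0 := by
      simpa using ((hH.const_mul ((starRingEnd ℂ) a)).const_sub 1)
    have h3 := h2.inv (hden 0 h0)
    have hGderiv : HasDerivAt G
        (deriv H 0 * (1 - (starRingEnd ℂ) a * H 0)⁻¹ +
         (H 0 - a) * (-(-((starRingEnd ℂ) a * deriv H 0)) / (1 - (starRingEnd ℂ) a * H 0) ^ 2)) 0 :=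
      (hH.sub_const a).mul h3
    have hval : deriv G 0 = deriv H 0 * (1 - (starRingEnd ℂ) a * a)⁻¹ := by
      rw [hGderiv.deriv]
      simp [haa]
    rw [hval] at hG1
    have hnorm : ‖1 - (starRingEnd ℂ) a * a‖ = 1 - ‖a‖ ^ 2 := by
      have : (starRingEnd ℂ) a * a = ((‖a‖ ^ 2 : ℝ) : ℂ) := by
        rw [mul_comm, Complex.mul_conj, Complex.sq_norm]
      rw [this, ← Complex.ofReal_one, ← Complex.ofReal_sub, Complex.norm_real, Real.norm_eq_abs]
      rw [_root_.abs_of_nonneg]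
      nlinarith [norm_nonneg a]
    rw [norm_mul, norm_inv, hnorm] at hG1
    have hpos : 0 < 1 - ‖a‖ ^ 2 := by nlinarith [norm_nonneg a]
    calc ‖deriv H 0‖
        = ‖deriv H 0‖ * (1 - ‖a‖ ^ 2)⁻¹ * (1 - ‖a‖ ^ 2) := by
          field_simp
      _ ≤ 1 * (1 - ‖a‖ ^ 2) := by
          apply mul_le_mul_of_nonneg_right hG1 hpos.le
      _ = 1 - ‖H 0‖ ^ 2 := by rw [one_mul]


lemma zmul_d1 {D : ℂ → ℂ} (hD : AnalyticOnNhd ℂ D (ball 0 1)) :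
    deriv (fun z => z * D z) 0 = D 0 := by
  have h0 : (0:ℂ) ∈ ball (0:ℂ) 1 := by simp
  have h := (hasDerivAt_id (0:ℂ)).mul (hD 0 h0).differentiableAt.hasDerivAt
  simp only [id_eq, Pi.mul_def, Pi.add_def] at h
  rw [h.deriv]; simp

lemma zmul_ev {D : ℂ → ℂ} (hD : AnalyticOnNhd ℂ D (ball 0 1)) :
    deriv (fun z => z * D z) =ᶠ[nhds (0:ℂ)] fun z => D z + z * deriv D z := by
  have h0 : (0:ℂ) ∈ ball (0:ℂ) 1 := by simp
  filter_upwards [isOpen_ball.mem_nhds h0] with z hz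
  have h := (hasDerivAt_id z).mul (hD z hz).differentiableAt.hasDerivAt
  simp only [id_eq, Pi.mul_def, Pi.add_def] at h
  rw [h.deriv]; ring

lemma zmul_d2 {D : ℂ → ℂ} (hD : AnalyticOnNhd ℂ D (ball 0 1)) :
    deriv (deriv (fun z => z * D z)) 0 = 2 * deriv D 0 := by
  have h0 : (0:ℂ) ∈ ball (0:ℂ) 1 := by simp
  rw [(zmul_ev hD).deriv_eq]
  have h := ((hD 0 h0).differentiableAt.hasDerivAt).add
    ((hasDerivAt_id (0:ℂ)).mul (hD.deriv 0 h0).differentiableAt.hasDerivAt)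
  simp only [id_eq, Pi.mul_def, Pi.add_def] at h
  rw [h.deriv]; ring

lemma zmul_d3 {D : ℂ → ℂ} (hD : AnalyticOnNhd ℂ D (ball 0 1)) :
    deriv (deriv (deriv (fun z => z * D z))) 0 = 3 * deriv (deriv D) 0 := by
  have h0 : (0:ℂ) ∈ ball (0:ℂ) 1 := by simp
  rw [((zmul_ev hD).deriv).deriv_eq]
  have e2 : deriv (fun z => D z + z * deriv D z) =ᶠ[nhds (0:ℂ)]
      fun z => deriv D z + (deriv D z + z * deriv (deriv D) z) := by
    filter_upwards [isOpen_ball.mem_nhds h0] with z hz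
    have h := ((hD z hz).differentiableAt.hasDerivAt).add
      ((hasDerivAt_id z).mul (hD.deriv z hz).differentiableAt.hasDerivAt)
    simp only [id_eq, Pi.mul_def, Pi.add_def] at h
    rw [h.deriv]; ring
  rw [e2.deriv_eq]
  have h := ((hD.deriv 0 h0).differentiableAt.hasDerivAt).add
    (((hD.deriv 0 h0).differentiableAt.hasDerivAt).add
      ((hasDerivAt_id (0:ℂ)).mul ((hD.deriv.deriv) 0 h0).differentiableAt.hasDerivAt))
  simp only [id_eq, Pi.mul_def, Pi.add_def] at h
  rw [h.deriv]; ring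

lemma dslope_mul {F : ℂ → ℂ} (h0 : F 0 = 0) : F = fun z => z * dslope F 0 z := by
  funext z
  rcases eq_or_ne z 0 with rfl | hz
  · simp [h0]
  · rw [dslope_of_ne _ hz, slope_def_field]
    field_simp [h0]
    simp [h0, mul_comm]

lemma dslope_diff {F : ℂ → ℂ} (hF : DifferentiableOn ℂ F (ball 0 1)) :
    DifferentiableOn ℂ (dslope F 0) (ball 0 1) :=
  (Complex.differentiableOn_dslope (ball_mem_nhds 0 one_pos)).mpr hF

lemma polyineq {x y : ℝ} (hx : 0 ≤ x) (hx1 : x ≤ 1) (hy : 0 ≤ y) (hyt : y ≤ 1 - x^2) :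
    (3/8)*x*((1-x^2)^2 - y^2 + x*y^2) + ((7/48)*x^2*y + y^2/3 + (13/768)*x^4)*(1-x^2)
      ≤ (1-x^2)/3 := by
  nlinarith [sq_nonneg x, sq_nonneg y, sq_nonneg (1-x), sq_nonneg (1-x^2-y), sq_nonneg (x*y),
    mul_nonneg hx hy, sq_nonneg (x-y), sq_nonneg (x+y), sq_nonneg (x*(1-x)),
    mul_nonneg (mul_nonneg hx hx) hy, mul_nonneg hy (sq_nonneg x),
    mul_nonneg (sub_nonneg.2 hyt) hy, mul_nonneg (sub_nonneg.2 hyt) hx,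
    mul_nonneg (mul_nonneg (sub_nonneg.2 hyt) hx) hy,
    mul_nonneg (mul_nonneg (sub_nonneg.2 hx1) hx) hy]




lemma BTB_coeffs {f ω : ℂ → ℂ} (hω : AnalyticOnNhd ℂ ω (ball 0 1)) (hω0 : ω 0 = 0)
    (hfd : ∀ z ∈ ball (0:ℂ) 1, deriv f z = psqrt (1 + Complex.tanh (ω z))) :
    iteratedDeriv 2 f 0 = deriv ω 0 / 2 ∧
    iteratedDeriv 3 f 0 = deriv (deriv ω) 0 / 2 - (deriv ω 0)^2 / 4 ∧
    iteratedDeriv 4 f 0 = deriv (deriv (deriv ω)) 0 / 2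
      - (3/4) * deriv ω 0 * deriv (deriv ω) 0 - (5/8) * (deriv ω 0)^3 := by
  have h01 : (0:ℂ) ∈ ball (0:ℂ) 1 := by simp
  set W := deriv ω with hW_def
  set W2 := deriv W with hW2_def
  set W3 := deriv W2 with hW3_def
  set u : ℂ → ℂ := fun z => 1 + Complex.tanh (ω z) with hu_def
  set g : ℂ → ℂ := fun z => psqrt (u z) with hg_def
  -- find a good radius
  have hcω : ContinuousAt ω 0 := (hω 0 h01).continuousAt
  have hccosh : ContinuousAt (fun z => Complex.cosh (ω z)) 0 :=
    Complex.continuous_cosh.continuousAt.comp hcω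
  have hT : ContinuousAt (fun z => Complex.sinh (ω z) / Complex.cosh (ω z)) 0 := by
    apply ContinuousAt.div (Complex.continuous_sinh.continuousAt.comp hcω) hccosh
    simp [hω0]
  have E1 : ∀ᶠ z in nhds (0:ℂ), z ∈ ball (0:ℂ) 1 := isOpen_ball.mem_nhds h01
  have E2 : ∀ᶠ z in nhds (0:ℂ), Complex.cosh (ω z) ≠ 0 := by
    apply hccosh.eventually_ne
    simp [hω0]
  have E3 : ∀ᶠ z in nhds (0:ℂ), ‖Complex.sinh (ω z) / Complex.cosh (ω z)‖ < 1/2 := by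
    have hc : ContinuousAt (fun z => ‖Complex.sinh (ω z) / Complex.cosh (ω z)‖) 0 :=
      continuous_norm.continuousAt.comp hT
    have h0 : ‖Complex.sinh (ω 0) / Complex.cosh (ω 0)‖ = 0 := by simp [hω0]
    have := hc.tendsto
    rw [h0] at this
    exact this.eventually_lt_const (by norm_num)
  obtain ⟨r, hr0, hprop⟩ := Metric.eventually_nhds_iff_ball.mp (E1.and (E2.and E3))
  have h0r : (0:ℂ) ∈ ball (0:ℂ) r := mem_ball_self hr0
  -- basic facts on the small ball
  have huslit : ∀ z ∈ ball (0:ℂ) r, u z ∈ slitPlane := by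
    intro z hz
    obtain ⟨hz1, hcz, hTz⟩ := hprop z hz
    rw [Complex.mem_slitPlane_iff]
    left
    have htanh : Complex.tanh (ω z) = Complex.sinh (ω z) / Complex.cosh (ω z) :=
      Complex.tanh_eq_sinh_div_cosh _
    have hre : (u z).re = 1 + (Complex.sinh (ω z) / Complex.cosh (ω z)).re := by
      simp [hu_def, htanh]
    rw [hre]
    set q := (Complex.sinh (ω z) / Complex.cosh (ω z))
    have h1 := Complex.abs_re_le_norm q
    have h2 := abs_le.mp h1
    linarith [h2.1]
  have hune : ∀ z ∈ ball (0:ℂ) r, u z ≠ 0 :=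
    fun z hz => Complex.slitPlane_ne_zero (huslit z hz)
  have key : ∀ z ∈ ball (0:ℂ) r, HasDerivAt u (W z * (u z * (2 - u z))) z := by
    intro z hz
    obtain ⟨hz1, hcz, hTz⟩ := hprop z hz
    have hωd : HasDerivAt ω (W z) z := (hω z hz1).differentiableAt.hasDerivAt
    have hsinh : HasDerivAt (fun z => Complex.sinh (ω z)) (Complex.cosh (ω z) * W z) z :=
      (Complex.hasDerivAt_sinh (ω z)).comp z hωd
    have hcosh : HasDerivAt (fun z => Complex.cosh (ω z)) (Complex.sinh (ω z) * W z) z :=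
      (Complex.hasDerivAt_cosh (ω z)).comp z hωd
    have hdiv := hsinh.div hcosh hcz
    have hueq : u = fun w => 1 + Complex.sinh (ω w) / Complex.cosh (ω w) := by
      funext w
      simp [hu_def, Complex.tanh_eq_sinh_div_cosh]
    have hu1 : HasDerivAt (fun w => 1 + Complex.sinh (ω w) / Complex.cosh (ω w)) _ z := hdiv.const_add 1
    rw [← hueq] at hu1
    convert hu1 using 1
    have hid : Complex.cosh (ω z)^2 - Complex.sinh (ω z)^2 = 1 := Complex.cosh_sq_sub_sinh_sq _
    have huz : u z = 1 + Complex.sinh (ω z) / Complex.cosh (ω z) := by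
      rw [hueq]
    rw [huz]
    have hinv : Complex.cosh (ω z) * (Complex.cosh (ω z))⁻¹ = 1 := mul_inv_cancel₀ hcz
    linear_combination (-(W z) * (Complex.cosh (ω z) * (Complex.cosh (ω z))⁻¹ + 1)) * hinv
  have keyg : ∀ z ∈ ball (0:ℂ) r, HasDerivAt g ((1/2 : ℂ) * (W z * ((2 - u z) * g z))) z := by
    intro z hz
    have hu1 := key z hz
    have hlog := (Complex.hasDerivAt_log (huslit z hz)).comp z hu1
    have h12 := hlog.const_mul (1/2 : ℂ)
    have hexp := (Complex.hasDerivAt_exp ((1/2 : ℂ) * Complex.log (u z))).comp z h12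
    have hexp' : HasDerivAt g (Complex.exp ((1/2 : ℂ) * Complex.log (u z)) *
        ((1/2 : ℂ) * ((u z)⁻¹ * (W z * (u z * (2 - u z)))))) z := by
      have hgeq : g = (Complex.exp ∘ fun y => (1/2 : ℂ) * (Complex.log ∘ u) y) := by
        funext w
        simp [hg_def, psqrt, Function.comp]
      rw [hgeq]
      exact hexp
    convert hexp' using 1
    have hgz : g z = Complex.exp ((1/2 : ℂ) * Complex.log (u z)) := rfl
    rw [hgz]
    have hinvu : u z * (u z)⁻¹ = 1 := mul_inv_cancel₀ (hune z hz)
    linear_combination (-(1/2 : ℂ) * W z * Complex.exp ((1/2:ℂ) * Complex.log (u z)) * (2 - u z)) * hinvu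
  -- values at 0
  have hu0 : u 0 = 1 := by simp [hu_def, hω0]
  have hg0 : g 0 = 1 := by simp [hg_def, psqrt, hu0]
  have hWat : ∀ z ∈ ball (0:ℂ) r, HasDerivAt W (W2 z) z := by
    intro z hz
    exact (hω.deriv z (hprop z hz).1).differentiableAt.hasDerivAt
  have hW2at0 : HasDerivAt W2 (W3 0) 0 := ((hω.deriv.deriv) 0 h01).differentiableAt.hasDerivAt
  set G1 : ℂ → ℂ := fun z => (1/2:ℂ) * (W z * ((2 - u z) * g z)) with hG1_def
  set G2 : ℂ → ℂ := fun z => (1/2:ℂ) * (W2 z * ((2 - u z) * g z) +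
      W z * (-(W z * (u z * (2 - u z))) * g z +
        (2 - u z) * ((1/2:ℂ) * (W z * ((2 - u z) * g z))))) with hG2_def
  have ev1 : deriv g =ᶠ[nhds (0:ℂ)] G1 := by
    filter_upwards [Metric.ball_mem_nhds (0:ℂ) hr0] with z hz
    exact (keyg z hz).deriv
  have hG1at : ∀ z ∈ ball (0:ℂ) r, HasDerivAt G1 (G2 z) z := by
    intro z hz
    have hA := ((key z hz).const_sub 2).mul (keyg z hz)
    exact ((hWat z hz).mul hA).const_mul (1/2:ℂ)
  have ev2 : deriv G1 =ᶠ[nhds (0:ℂ)] G2 := by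
    filter_upwards [Metric.ball_mem_nhds (0:ℂ) hr0] with z hz
    exact (hG1at z hz).deriv
  -- HasDerivAt G2 at 0
  have hu' := key 0 h0r
  have hg' := keyg 0 h0r
  have hW' := hWat 0 h0r
  have h2u := hu'.const_sub 2
  have hA := h2u.mul hg'
  have hC := (hW'.mul (hu'.mul h2u)).neg
  have hE := (hW'.mul hA).const_mul (1/2:ℂ)
  have hB := (hC.mul hg').add (h2u.mul hE)
  have hT1 := hW2at0.mul hA
  have hT2 := hW'.mul hB
  have hG2at0 := (hT1.add hT2).const_mul (1/2:ℂ)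
  -- eventual equality of deriv f and g
  have hdf : deriv f =ᶠ[nhds (0:ℂ)] g := by
    filter_upwards [isOpen_ball.mem_nhds h01] with z hz
    exact hfd z hz
  refine ⟨?_, ?_, ?_⟩
  · rw [show (2:ℕ) = 0+1+1 from rfl]
    simp only [iteratedDeriv_succ, iteratedDeriv_zero]
    rw [hdf.deriv_eq, (keyg 0 h0r).deriv]
    simp only [hu0, hg0]
    ring
  · rw [iteratedDeriv_succ, iteratedDeriv_succ, iteratedDeriv_succ]
    simp only [iteratedDeriv_succ, iteratedDeriv_zero]
    rw [(hdf.deriv).deriv_eq, ev1.deriv_eq, (hG1at 0 h0r).deriv]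
    simp only [hG2_def, hu0, hg0]
    ring
  · rw [iteratedDeriv_succ, iteratedDeriv_succ, iteratedDeriv_succ, iteratedDeriv_succ]
    simp only [iteratedDeriv_succ, iteratedDeriv_zero]
    rw [((hdf.deriv).deriv).deriv_eq, (ev1.deriv).deriv_eq, ev2.deriv_eq, HasDerivAt.deriv (f := G2) hG2at0]
    simp only [hu0, hg0, Pi.mul_apply, Pi.neg_apply, Pi.add_apply, Pi.sub_apply]
    ring



set_option maxHeartbeats 2000000 in
theorem BTB_hankel_log_inverse_bound (f : ℂ → ℂ) (hf : IsBTB f)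
    (Γ₁ Γ₂ Γ₃ : ℂ)
    (hΓ₁ : Γ₁ = -(tCoeff f 2) / 2)
    (hΓ₂ : Γ₂ = -(1/2) * (tCoeff f 3 - (3/2) * (tCoeff f 2)^2))
    (hΓ₃ : Γ₃ = -(1/2) * (tCoeff f 4 - 4 * tCoeff f 2 * tCoeff f 3 + (10/3) * (tCoeff f 2)^3)) :
    ‖Γ₁ * Γ₃ - Γ₂^2‖ ≤ 1/144 := by
  obtain ⟨hfa, hf0, hfd1, hinj, ω, hω, hω0, hωb, hfd⟩ := hf
  obtain ⟨hI2, hI3, hI4⟩ := BTB_coeffs hω hω0 hfd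
  have h01 : (0:ℂ) ∈ ball (0:ℂ) 1 := by simp
  have hωdiff : DifferentiableOn ℂ ω (ball 0 1) :=
    fun z hz => ((hω z hz).differentiableAt).differentiableWithinAt
  set D := dslope ω 0 with hD_def
  have hDd : DifferentiableOn ℂ D (ball 0 1) := dslope_diff hωdiff
  have hDa : AnalyticOnNhd ℂ D (ball 0 1) := hDd.analyticOnNhd isOpen_ball
  have hfact : ω = fun z => z * D z := dslope_mul hω0
  have hd1 : deriv ω 0 = D 0 := by rw [hfact]; exact zmul_d1 hDa
  have hd2 : deriv (deriv ω) 0 = 2 * deriv D 0 := by rw [hfact]; exact zmul_d2 hDa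
  have hd3 : deriv (deriv (deriv ω)) 0 = 3 * deriv (deriv D) 0 := by
    rw [hfact]; exact zmul_d3 hDa
  have ha2 : tCoeff f 2 = D 0 / 4 := by
    rw [tCoeff, hI2, hd1]; norm_num [Nat.factorial]; ring
  have ha3 : tCoeff f 3 = deriv D 0 / 6 - (D 0)^2 / 24 := by
    rw [tCoeff, hI3, hd1, hd2]; norm_num [Nat.factorial]; ring
  have ha4 : tCoeff f 4 = deriv (deriv D) 0 / 16 - D 0 * deriv D 0 / 16 - 5 * (D 0)^3 / 192 := by
    rw [tCoeff, hI4, hd1, hd2, hd3]; norm_num [Nat.factorial]; ring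
  have hH : Γ₁ * Γ₃ - Γ₂^2 =
      ((3/16 : ℂ) * (D 0 * deriv (deriv D) 0) - (7/48 : ℂ) * ((D 0)^2 * deriv D 0)
        - (1/3 : ℂ) * (deriv D 0)^2 - (13/768 : ℂ) * (D 0)^4) / 48 := by
    rw [hΓ₁, hΓ₂, hΓ₃, ha2, ha3, ha4]; ring
  set X := (3/16 : ℂ) * (D 0 * deriv (deriv D) 0) - (7/48 : ℂ) * ((D 0)^2 * deriv D 0)
      - (1/3 : ℂ) * (deriv D 0)^2 - (13/768 : ℂ) * (D 0)^4 with hX_def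
  suffices hmain : ‖X‖ ≤ 1/3 by
    rw [hH, norm_div, show ‖(48:ℂ)‖ = 48 by norm_num [Complex.norm_ofNat]]
    linarith
  -- Schwarz machinery
  have hDle : ∀ z ∈ ball (0:ℂ) 1, ‖D z‖ ≤ 1 := by
    intro z hz
    have hmaps : Set.MapsTo ω (ball 0 1) (ball (ω 0) 1) := by
      intro w hw; rw [hω0, mem_ball_zero_iff]; exact hωb w hw
    simpa using Complex.norm_dslope_le_div_of_mapsTo_ball hωdiff (hmaps.mono_right ball_subset_closedBall) hz
  set x := ‖D 0‖ with hx_def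
  set y := ‖deriv D 0‖ with hy_def
  have hx0 : (0:ℝ) ≤ x := norm_nonneg _
  have hy0 : (0:ℝ) ≤ y := norm_nonneg _
  have hx1 : x ≤ 1 := hDle 0 h01
  have hyB : y ≤ 1 - x^2 := SP0 hDd hDle
  by_cases hcase : ∃ z ∈ ball (0:ℂ) 1, ‖D z‖ = 1
  · -- constant case
    obtain ⟨z₀, hz₀, hz₀1⟩ := hcase
    have hmax : IsMaxOn (norm ∘ D) (ball (0:ℂ) 1) z₀ := by
      intro z hz
      simp only [Function.comp_apply, Set.mem_setOf_eq, hz₀1]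
      exact hDle z hz
    have heq := Complex.eqOn_of_isPreconnected_of_isMaxOn_norm
      (convex_ball (0:ℂ) 1).isPreconnected isOpen_ball hDd hz₀ hmax
    have hB0 : deriv D 0 = 0 := by
      have hev : D =ᶠ[nhds (0:ℂ)] fun _ => D z₀ := by
        filter_upwards [isOpen_ball.mem_nhds h01] with z hz using heq hz
      rw [hev.deriv_eq, deriv_const]
    have hC0 : deriv (deriv D) 0 = 0 := by
      have hev : deriv D =ᶠ[nhds (0:ℂ)] fun _ => (0:ℂ) := by
        filter_upwards [isOpen_ball.mem_nhds h01] with z hz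
        have hevz : D =ᶠ[nhds z] fun _ => D z₀ := by
          filter_upwards [isOpen_ball.mem_nhds hz] with w hw using heq hw
        rw [hevz.deriv_eq, deriv_const]
      rw [hev.deriv_eq, deriv_const]
    have hXeq : X = -((13/768 : ℂ) * (D 0)^4) := by rw [hX_def, hB0, hC0]; ring
    rw [hXeq, norm_neg, norm_mul, norm_pow]
    have h13 : ‖(13/768 : ℂ)‖ = 13/768 := by
      rw [norm_div]; norm_num [Complex.norm_ofNat]
    rw [h13]
    have hx4 : x^4 ≤ 1 := pow_le_one₀ hx0 hx1
    rw [← hx_def]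
    nlinarith
  · -- strict case
    push_neg at hcase
    have hxlt : ∀ z ∈ ball (0:ℂ) 1, ‖D z‖ < 1 :=
      fun z hz => lt_of_le_of_ne (hDle z hz) (hcase z hz)
    have hxA : ‖D 0‖ < 1 := hxlt 0 h01
    set p : ℂ → ℂ := fun z => (D z - D 0) * (1 - (starRingEnd ℂ) (D 0) * D z)⁻¹ with hp_def
    have hpden : ∀ z ∈ ball (0:ℂ) 1, 1 - (starRingEnd ℂ) (D 0) * D z ≠ 0 :=
      fun z hz => mob_den_ne hxA (hDle z hz)
    have hpd : DifferentiableOn ℂ p (ball 0 1) :=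
      (hDd.sub_const (D 0)).mul
        (((differentiableOn_const 1).sub ((differentiableOn_const _).mul hDd)).inv hpden)
    have hp0 : p 0 = 0 := by simp [hp_def]
    have hplt : ∀ z ∈ ball (0:ℂ) 1, ‖p z‖ < 1 := by
      intro z hz
      rw [hp_def]
      simp only [norm_mul, norm_inv]
      rw [← div_eq_mul_inv, div_lt_one (norm_pos_iff.mpr (hpden z hz))]
      exact mob_abs_lt hxA (hxlt z hz)
    set ω₁ := dslope p 0 with hω₁_def
    have hω₁d : DifferentiableOn ℂ ω₁ (ball 0 1) := dslope_diff hpd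
    have hω₁a : AnalyticOnNhd ℂ ω₁ (ball 0 1) := hω₁d.analyticOnNhd isOpen_ball
    have hω₁b : ∀ z ∈ ball (0:ℂ) 1, ‖ω₁ z‖ ≤ 1 := by
      intro z hz
      have hmaps : Set.MapsTo p (ball 0 1) (ball (p 0) 1) := by
        intro w hw; rw [hp0, mem_ball_zero_iff]; exact hplt w hw
      simpa using Complex.norm_dslope_le_div_of_mapsTo_ball hpd (hmaps.mono_right ball_subset_closedBall) hz
    have hSP := SP0 hω₁d hω₁b
    have hpfact : p = fun z => z * ω₁ z := dslope_mul hp0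
    have hp1 : deriv p 0 = ω₁ 0 := by rw [hpfact]; exact zmul_d1 hω₁a
    have hp2 : deriv (deriv p) 0 = 2 * deriv ω₁ 0 := by rw [hpfact]; exact zmul_d2 hω₁a
    -- derivatives of p at 0 in terms of D
    have hDat : ∀ z ∈ ball (0:ℂ) 1, HasDerivAt D (deriv D z) z :=
      fun z hz => ((hDa z hz).differentiableAt).hasDerivAt
    have hqat : ∀ z ∈ ball (0:ℂ) 1, HasDerivAt (fun w => 1 - (starRingEnd ℂ) (D 0) * D w)
        (-((starRingEnd ℂ) (D 0) * deriv D z)) z := by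
      intro z hz
      simpa using (((hDat z hz).const_mul ((starRingEnd ℂ) (D 0))).const_sub 1)
    set P1 : ℂ → ℂ := fun z => deriv D z * (1 - (starRingEnd ℂ) (D 0) * D z)⁻¹ +
        (D z - D 0) * (-(-((starRingEnd ℂ) (D 0) * deriv D z)) / (1 - (starRingEnd ℂ) (D 0) * D z)^2)
      with hP1_def
    have hpat : ∀ z ∈ ball (0:ℂ) 1, HasDerivAt p (P1 z) z := by
      intro z hz
      exact ((hDat z hz).sub_const (D 0)).mul ((hqat z hz).inv (hpden z hz))
    have hevp : deriv p =ᶠ[nhds (0:ℂ)] P1 := by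
      filter_upwards [isOpen_ball.mem_nhds h01] with z hz using (hpat z hz).deriv
    -- value of ω₁ at 0
    set q : ℂ := 1 - (starRingEnd ℂ) (D 0) * D 0 with hq_def
    have hqne : q ≠ 0 := hpden 0 h01
    have hω₁0 : ω₁ 0 = deriv D 0 * q⁻¹ := by
      rw [← hp1, (hpat 0 h01).deriv, hP1_def]
      simp [hq_def]
    -- second derivative of p at 0
    have hD'0 : HasDerivAt (deriv D) (deriv (deriv D) 0) 0 :=
      ((hDa.deriv 0 h01).differentiableAt).hasDerivAt
    have hnum : HasDerivAt (fun w => -(-((starRingEnd ℂ) (D 0) * deriv D w)))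
        (-(-((starRingEnd ℂ) (D 0) * deriv (deriv D) 0))) 0 :=
      ((hD'0.const_mul _).neg).neg
    have hden2 := (hqat 0 h01).pow 2
    have hfrac := hnum.div hden2 (pow_ne_zero 2 (hpden 0 h01))
    have hterm2 := ((hDat 0 h01).sub_const (D 0)).mul hfrac
    have hterm1 := hD'0.mul ((hqat 0 h01).inv (hpden 0 h01))
    have hP1at := hterm1.add hterm2
    have hd2p := hevp.deriv_eq.trans hP1at.deriv
    rw [hp2] at hd2p
    -- simplify: 2 * deriv ω₁ 0 = (C*q + 2*conj(D 0)*B^2)/q^2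
    set N : ℂ := deriv (deriv D) 0 * q + 2 * (starRingEnd ℂ) (D 0) * (deriv D 0)^2 with hN_def
    have hval : 2 * deriv ω₁ 0 = N / q^2 := by
      rw [hd2p, hN_def]
      simp only [Pi.inv_apply, Pi.div_apply, Pi.pow_apply, Pi.mul_apply, Pi.sub_apply, Pi.neg_apply]
      rw [← hq_def]
      field_simp
      ring
    -- real estimates
    set t : ℝ := 1 - x^2 with ht_def
    have htpos : 0 < t := by rw [ht_def]; nlinarith
    have hconj : (starRingEnd ℂ) (D 0) * D 0 = ((x^2 : ℝ) : ℂ) := by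
      rw [mul_comm, Complex.mul_conj, hx_def]
      norm_cast
      exact (Complex.sq_norm _).symm
    have hqt : q = ((t : ℝ) : ℂ) := by
      rw [hq_def, hconj, ht_def]
      push_cast
      ring
    have habsq : ‖q‖ = t := by rw [hqt, Complex.norm_real, Real.norm_eq_abs, _root_.abs_of_pos htpos]
    -- |ω₁ 0| = y / t
    have hab0 : ‖ω₁ 0‖ = y * t⁻¹ := by
      rw [hω₁0, norm_mul, norm_inv, habsq]
    -- |deriv ω₁ 0| = |N| / (2 t^2)
    have habd : ‖deriv ω₁ 0‖ = ‖N‖ / (2 * t^2) := by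
      have h2 : deriv ω₁ 0 = N / q^2 / 2 := by linear_combination hval / 2
      rw [h2, norm_div, norm_div, norm_pow, habsq, Complex.norm_two, div_div,
        mul_comm (t^2) (2:ℝ)]
    rw [habd, hab0] at hSP
    have hN2 : ‖N‖ ≤ 2*(t^2 - y^2) := by
      have hy2 : (y * t⁻¹)^2 = y^2/t^2 := by
        field_simp
      rw [hy2, div_le_iff₀ (by positivity : (0:ℝ) < 2*t^2)] at hSP
      have he : (1 - y^2/t^2)*(2*t^2) = 2*(t^2-y^2) := by
        field_simp
      rw [he] at hSP
      exact hSP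
    have habs_sub : ∀ u v : ℂ, ‖u - v‖ ≤ ‖u‖ + ‖v‖ :=
      fun u v => by simpa [sub_eq_add_neg] using norm_add_le u (-v)
    have habsC : ‖deriv (deriv D) 0‖ * t ≤ 2*(t^2 - y^2 + x*y^2) := by
      have hCq : deriv (deriv D) 0 * q = N - 2*(starRingEnd ℂ) (D 0) * (deriv D 0)^2 := by
        rw [hN_def]; ring
      have e1 : ‖deriv (deriv D) 0‖ * t = ‖deriv (deriv D) 0 * q‖ := by
        rw [norm_mul, habsq]
      have e3 : ‖2*(starRingEnd ℂ) (D 0) * (deriv D 0)^2‖ = 2*x*y^2 := by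
        rw [norm_mul, norm_mul, norm_pow, Complex.norm_two, Complex.norm_conj, hx_def, hy_def]
      have e2 := habs_sub N (2*(starRingEnd ℂ) (D 0) * (deriv D 0)^2)
      rw [e3] at e2
      rw [e1, hCq]
      linarith
    -- triangle inequality for X
    have c1 : ‖(3/16:ℂ)‖ = 3/16 := by
      rw [norm_div]; norm_num [Complex.norm_ofNat]
    have c2 : ‖(7/48:ℂ)‖ = 7/48 := by
      rw [norm_div]; norm_num [Complex.norm_ofNat]
    have c3 : ‖(1/3:ℂ)‖ = 1/3 := by
      rw [norm_div]; norm_num [Complex.norm_ofNat]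
    have c4 : ‖(13/768:ℂ)‖ = 13/768 := by
      rw [norm_div]; norm_num [Complex.norm_ofNat]
    have hXb : ‖X‖ ≤ 3/16*(x*‖deriv (deriv D) 0‖) + 7/48*(x^2*y)
        + 1/3*y^2 + 13/768*x^4 := by
      calc ‖X‖
          ≤ ‖(3/16 : ℂ) * (D 0 * deriv (deriv D) 0)
              - (7/48 : ℂ) * ((D 0)^2 * deriv D 0) - (1/3 : ℂ) * (deriv D 0)^2‖
            + ‖(13/768 : ℂ) * (D 0)^4‖ := habs_sub _ _
        _ ≤ ‖(3/16 : ℂ) * (D 0 * deriv (deriv D) 0)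
              - (7/48 : ℂ) * ((D 0)^2 * deriv D 0)‖ + ‖(1/3 : ℂ) * (deriv D 0)^2‖
            + ‖(13/768 : ℂ) * (D 0)^4‖ := by
            linarith [habs_sub ((3/16 : ℂ) * (D 0 * deriv (deriv D) 0)
              - (7/48 : ℂ) * ((D 0)^2 * deriv D 0)) ((1/3 : ℂ) * (deriv D 0)^2)]
        _ ≤ ‖(3/16 : ℂ) * (D 0 * deriv (deriv D) 0)‖
            + ‖(7/48 : ℂ) * ((D 0)^2 * deriv D 0)‖
            + ‖(1/3 : ℂ) * (deriv D 0)^2‖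
            + ‖(13/768 : ℂ) * (D 0)^4‖ := by
            linarith [habs_sub ((3/16 : ℂ) * (D 0 * deriv (deriv D) 0))
              ((7/48 : ℂ) * ((D 0)^2 * deriv D 0))]
        _ = 3/16*(x*‖deriv (deriv D) 0‖) + 7/48*(x^2*y) + 1/3*y^2 + 13/768*x^4 := by
            simp only [norm_mul, norm_pow]
            rw [c1, c2, c3, c4, hx_def, hy_def]
    have h1 : 3/16*x*(‖deriv (deriv D) 0‖*t) ≤ 3/16*x*(2*(t^2-y^2+x*y^2)) :=
      mul_le_mul_of_nonneg_left habsC (by positivity)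
    have hpoly := polyineq hx0 hx1 hy0 hyB
    have hPt : (3/16*(x*‖deriv (deriv D) 0‖) + 7/48*(x^2*y) + 1/3*y^2
        + 13/768*x^4) * t ≤ t/3 := by
      rw [ht_def] at h1 ⊢
      nlinarith [h1, hpoly]
    have hP13 : 3/16*(x*‖deriv (deriv D) 0‖) + 7/48*(x^2*y) + 1/3*y^2
        + 13/768*x^4 ≤ 1/3 := by nlinarith [hPt, htpos]
    linarith [hXb]
end
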